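/- Specializing the second Fu–Lascoux identity at t = 0: for n ≥ 0, ∑_{i=0}^n [n choose i]_q (-1)^{i-1} (x+1)(x+q)⋯(x+q^{i-1}) q^i = -(q;q)_n ∑_{i=0}^n (-xq)^i/(q;q)_i. -/

import Mathlib

open Finset

/-- The q-Pochhammer symbol `(a;q)_n = (1-a)(1-aq)⋯(1-aq^{n-1})`. -/
noncomputable def qPoch {K : Type*} [Field K] (q a : K) (n : ℕ) : K :=
  ∏ k ∈ Finset.range n, (1 - a * q ^ k)

/-- The Gaussian binomial coefficient `[n choose i]_q = (q;q)_n / ((q;q)_i (q;q)_{n-i})`. -/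
noncomputable def qBinom {K : Type*} [Field K] (q : K) (n i : ℕ) : K :=
  qPoch q q n / (qPoch q q i * qPoch q q (n - i))

/-- `wsum f m lo n = ∑_{lo ≤ i₁ ≤ i₂ ≤ ⋯ ≤ i_m ≤ n} f i₁ ⋯ f i_m`
(sum over weakly increasing `m`-tuples; the empty sum for `m = 0` is `1`). -/
noncomputable def wsum {K : Type*} [Field K] (f : ℕ → K) : ℕ → ℕ → ℕ → K
  | 0, _, _ => 1
  | m + 1, lo, n => ∑ j ∈ Finset.Icc lo n, f j * wsum f m j n

section Aux
variable {K : Type*} [Field K] (q : K)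

lemma qPoch_zero (a : K) : qPoch q a 0 = 1 := by simp [qPoch]

lemma qPoch_succ (a : K) (m : ℕ) : qPoch q a (m + 1) = qPoch q a m * (1 - a * q ^ m) := by
  simp [qPoch, Finset.prod_range_succ]

variable (hq : ∀ k : ℕ, 0 < k → q ^ k ≠ 1)
include hq

lemma one_sub_pow_ne (k : ℕ) : (1 : K) - q * q ^ k ≠ 0 := fun h =>
  hq (k + 1) (Nat.succ_pos k) (by rw [pow_succ, mul_comm]; exact (sub_eq_zero.mp h).symm)

lemma qPoch_ne_zero (m : ℕ) : qPoch q q m ≠ 0 :=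
  Finset.prod_ne_zero_iff.2 fun k _ => one_sub_pow_ne q hq k

lemma qBinom_zero (n : ℕ) : qBinom q n 0 = 1 := by
  simp [qBinom, qPoch_zero, div_self (qPoch_ne_zero q hq n)]

lemma qBinom_self (n : ℕ) : qBinom q n n = 1 := by
  simp [qBinom, qPoch_zero, div_self (qPoch_ne_zero q hq n)]

lemma qPascal1 (n i : ℕ) (h : i + 1 ≤ n) :
    qBinom q (n + 1) (i + 1) = q ^ (i + 1) * qBinom q n (i + 1) + qBinom q n i := by
  have h1 : n + 1 - (i + 1) = (n - i - 1) + 1 := by omega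
  have h2 : n - (i + 1) = n - i - 1 := by omega
  have h3 : n - i = (n - i - 1) + 1 := by omega
  rw [qBinom, qBinom, qBinom, h1, h2, h3]
  simp only [qPoch_succ]
  have hA := qPoch_ne_zero q hq n
  have hB := qPoch_ne_zero q hq i
  have hC := qPoch_ne_zero q hq (n - i - 1)
  have e1 := one_sub_pow_ne q hq n
  have e2 := one_sub_pow_ne q hq i
  have e3 := one_sub_pow_ne q hq (n - i - 1)
  have hpow : q ^ (i + 1) * (q * q ^ (n - i - 1)) = q * q ^ n := by
    rw [← pow_succ']
    rw [← pow_add, ← pow_succ']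
    congr 1; omega
  simp only [Nat.add_sub_cancel]
  field_simp
  linear_combination hpow

lemma qPascal2 (n i : ℕ) (h : i + 1 ≤ n) :
    qBinom q (n + 1) (i + 1) = qBinom q n (i + 1) + q ^ (n - i) * qBinom q n i := by
  have h1 : n + 1 - (i + 1) = (n - i - 1) + 1 := by omega
  have h2 : n - (i + 1) = n - i - 1 := by omega
  have h3 : n - i = (n - i - 1) + 1 := by omega
  rw [qBinom, qBinom, qBinom, h1, h2, h3]
  simp only [qPoch_succ]
  have hA := qPoch_ne_zero q hq n
  have hB := qPoch_ne_zero q hq i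
  have hC := qPoch_ne_zero q hq (n - i - 1)
  have e1 := one_sub_pow_ne q hq n
  have e2 := one_sub_pow_ne q hq i
  have e3 := one_sub_pow_ne q hq (n - i - 1)
  have hpow : q ^ ((n - i - 1) + 1) * (q * q ^ i) = q * q ^ n := by
    rw [← pow_succ', ← pow_add, ← pow_succ']
    congr 1; omega
  simp only [Nat.add_sub_cancel]
  field_simp
  linear_combination hpow

end Aux

section Sums
variable {K : Type*} [Field K] (q : K) (hq : ∀ k : ℕ, 0 < k → q ^ k ≠ 1)
include hq

lemma sum_pascal1 (a : ℕ → K) (n : ℕ) :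
    ∑ i ∈ range (n + 2), qBinom q (n + 1) i * a i
      = ∑ i ∈ range (n + 1), qBinom q n i * (q ^ i * a i + a (i + 1)) := by
  calc ∑ i ∈ range (n + 2), qBinom q (n + 1) i * a i
      = (∑ i ∈ range (n + 1), qBinom q (n + 1) (i + 1) * a (i + 1))
          + qBinom q (n + 1) 0 * a 0 := Finset.sum_range_succ' _ _
    _ = ((∑ i ∈ range n, qBinom q (n + 1) (i + 1) * a (i + 1))
          + qBinom q (n + 1) (n + 1) * a (n + 1)) + qBinom q (n + 1) 0 * a 0 := by
        rw [Finset.sum_range_succ]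
    _ = ((∑ i ∈ range n, (q ^ (i + 1) * qBinom q n (i + 1) + qBinom q n i) * a (i + 1))
          + a (n + 1)) + a 0 := by
        rw [qBinom_self q hq, qBinom_zero q hq, one_mul, one_mul]
        congr 2
        refine Finset.sum_congr rfl fun i hi => ?_
        rw [qPascal1 q hq n i (by simpa using Finset.mem_range.mp hi)]
    _ = (((∑ i ∈ range n, qBinom q n (i + 1) * (q ^ (i + 1) * a (i + 1))) + a 0)
          + ((∑ i ∈ range n, qBinom q n i * a (i + 1)) + a (n + 1))) := by
        have : ∑ i ∈ range n, (q ^ (i + 1) * qBinom q n (i + 1) + qBinom q n i) * a (i + 1)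
            = (∑ i ∈ range n, qBinom q n (i + 1) * (q ^ (i + 1) * a (i + 1)))
              + ∑ i ∈ range n, qBinom q n i * a (i + 1) := by
          rw [← Finset.sum_add_distrib]
          exact Finset.sum_congr rfl fun i _ => by ring
        rw [this]; ring
    _ = (∑ i ∈ range (n + 1), qBinom q n i * (q ^ i * a i))
          + ∑ i ∈ range (n + 1), qBinom q n i * a (i + 1) := by
        rw [Finset.sum_range_succ' (fun i => qBinom q n i * (q ^ i * a i)) n,
          Finset.sum_range_succ (fun i => qBinom q n i * a (i + 1)) n,
          qBinom_self q hq, qBinom_zero q hq]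
        ring
    _ = ∑ i ∈ range (n + 1), qBinom q n i * (q ^ i * a i + a (i + 1)) := by
        rw [← Finset.sum_add_distrib]
        refine Finset.sum_congr rfl fun i hi => by ring

lemma sum_pascal2 (a : ℕ → K) (n : ℕ) :
    ∑ i ∈ range (n + 2), qBinom q (n + 1) i * a i
      = ∑ i ∈ range (n + 1), qBinom q n i * (a i + q ^ (n - i) * a (i + 1)) := by
  calc ∑ i ∈ range (n + 2), qBinom q (n + 1) i * a i
      = (∑ i ∈ range (n + 1), qBinom q (n + 1) (i + 1) * a (i + 1))
          + qBinom q (n + 1) 0 * a 0 := Finset.sum_range_succ' _ _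
    _ = ((∑ i ∈ range n, qBinom q (n + 1) (i + 1) * a (i + 1))
          + qBinom q (n + 1) (n + 1) * a (n + 1)) + qBinom q (n + 1) 0 * a 0 := by
        rw [Finset.sum_range_succ]
    _ = ((∑ i ∈ range n, (qBinom q n (i + 1) + q ^ (n - i) * qBinom q n i) * a (i + 1))
          + a (n + 1)) + a 0 := by
        rw [qBinom_self q hq, qBinom_zero q hq, one_mul, one_mul]
        congr 2
        refine Finset.sum_congr rfl fun i hi => ?_
        rw [qPascal2 q hq n i (by simpa using Finset.mem_range.mp hi)]
    _ = (((∑ i ∈ range n, qBinom q n (i + 1) * a (i + 1)) + a 0)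
          + ((∑ i ∈ range n, qBinom q n i * (q ^ (n - i) * a (i + 1))) + a (n + 1))) := by
        have : ∑ i ∈ range n, (qBinom q n (i + 1) + q ^ (n - i) * qBinom q n i) * a (i + 1)
            = (∑ i ∈ range n, qBinom q n (i + 1) * a (i + 1))
              + ∑ i ∈ range n, qBinom q n i * (q ^ (n - i) * a (i + 1)) := by
          rw [← Finset.sum_add_distrib]
          exact Finset.sum_congr rfl fun i _ => by ring
        rw [this]; ring
    _ = (∑ i ∈ range (n + 1), qBinom q n i * a i)
          + ∑ i ∈ range (n + 1), qBinom q n i * (q ^ (n - i) * a (i + 1)) := by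
        rw [Finset.sum_range_succ' (fun i => qBinom q n i * a i) n,
          Finset.sum_range_succ (fun i => qBinom q n i * (q ^ (n - i) * a (i + 1))) n,
          qBinom_self q hq, qBinom_zero q hq, Nat.sub_self]
        ring
    _ = ∑ i ∈ range (n + 1), qBinom q n i * (a i + q ^ (n - i) * a (i + 1)) := by
        rw [← Finset.sum_add_distrib]
        refine Finset.sum_congr rfl fun i hi => by ring

end Sums

section Main
variable {K : Type*} [Field K] (q x : K) (hq : ∀ k : ℕ, 0 < k → q ^ k ≠ 1)
include hq

lemma aux_H (n : ℕ) :
    ∑ i ∈ range (n + 1), qBinom q n i * ((-1 : K) ^ i * ∏ j ∈ range i, (x + q ^ j))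
      = (-x) ^ n := by
  induction n with
  | zero => simp [qBinom_zero q hq]
  | succ n ih =>
    rw [show n + 1 + 1 = n + 2 from rfl,
      sum_pascal1 q hq (fun i => (-1 : K) ^ i * ∏ j ∈ range i, (x + q ^ j)) n]
    have step : ∀ i : ℕ,
        q ^ i * ((-1 : K) ^ i * ∏ j ∈ range i, (x + q ^ j))
          + (-1 : K) ^ (i + 1) * ∏ j ∈ range (i + 1), (x + q ^ j)
        = -x * ((-1 : K) ^ i * ∏ j ∈ range i, (x + q ^ j)) := fun i => by
      rw [Finset.prod_range_succ]; ring
    calc ∑ i ∈ range (n + 1), qBinom q n i *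
            (q ^ i * ((-1 : K) ^ i * ∏ j ∈ range i, (x + q ^ j))
              + (-1 : K) ^ (i + 1) * ∏ j ∈ range (i + 1), (x + q ^ j))
        = -x * ∑ i ∈ range (n + 1),
            qBinom q n i * ((-1 : K) ^ i * ∏ j ∈ range i, (x + q ^ j)) := by
          rw [Finset.mul_sum]
          refine Finset.sum_congr rfl fun i _ => ?_
          rw [step i]; ring
      _ = (-x) ^ (n + 1) := by rw [ih]; ring

lemma main_aux (n : ℕ) :
    ∑ i ∈ range (n + 1), qBinom q n i *
        ((-((-1 : K) ^ i)) * (∏ j ∈ range i, (x + q ^ j)) * q ^ i)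
      = -qPoch q q n * ∑ i ∈ range (n + 1), (-(x * q)) ^ i / qPoch q q i := by
  induction n with
  | zero => simp [qBinom_zero q hq, qPoch_zero]
  | succ n ih =>
    rw [show n + 1 + 1 = n + 2 from rfl,
      sum_pascal2 q hq
        (fun i => (-((-1 : K) ^ i)) * (∏ j ∈ range i, (x + q ^ j)) * q ^ i) n]
    have step : ∀ i ∈ range (n + 1),
        qBinom q n i * ((-((-1 : K) ^ i)) * (∏ j ∈ range i, (x + q ^ j)) * q ^ i
            + q ^ (n - i) *
              ((-((-1 : K) ^ (i + 1))) * (∏ j ∈ range (i + 1), (x + q ^ j)) * q ^ (i + 1)))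
        = (1 - q * q ^ n) *
            (qBinom q n i * ((-((-1 : K) ^ i)) * (∏ j ∈ range i, (x + q ^ j)) * q ^ i))
          + (x * (q * q ^ n)) *
            (qBinom q n i * ((-1 : K) ^ i * ∏ j ∈ range i, (x + q ^ j))) := by
      intro i hi
      have hpow : q ^ (n - i) * (q * q ^ i) = q * q ^ n := by
        rw [← pow_succ', ← pow_add, ← pow_succ']
        congr 1
        have := Finset.mem_range.mp hi
        omega
      rw [Finset.prod_range_succ]
      linear_combination (qBinom q n i * (-1 : K) ^ i *
        (∏ j ∈ range i, (x + q ^ j)) * (x + q ^ i)) * hpow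
    rw [Finset.sum_congr rfl step, Finset.sum_add_distrib, ← Finset.mul_sum, ← Finset.mul_sum,
      ih, aux_H q x hq n, Finset.sum_range_succ (fun i => (-(x * q)) ^ i / qPoch q q i) (n + 1),
      qPoch_succ]
    have hc : qPoch q q (n + 1) * ((-(x * q)) ^ (n + 1) / qPoch q q (n + 1))
        = (-(x * q)) ^ (n + 1) := mul_div_cancel₀ _ (qPoch_ne_zero q hq (n + 1))
    rw [qPoch_succ] at hc
    have h5 : (-(x * q) : K) ^ (n + 1) = (-x) ^ n * (-x) * (q ^ n * q) := by
      rw [show (-(x * q) : K) = -x * q by ring, mul_pow, pow_succ, pow_succ]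
    linear_combination hc + h5
  end Main


/-- The second Fu–Lascoux identity specialized at `t = 0`. -/
theorem fu_lascoux_two_at_zero {K : Type*} [Field K] (q x : K)
    (hq : ∀ k : ℕ, 0 < k → q ^ k ≠ 1) (n : ℕ) :
    ∑ i ∈ range (n + 1), qBinom q n i * (-((-1 : K) ^ i)) *
        (∏ j ∈ range i, (x + q ^ j)) * q ^ i
      = -qPoch q q n * ∑ i ∈ range (n + 1), (-(x * q)) ^ i / qPoch q q i := by
  rw [← main_aux q x hq n]
  exact Finset.sum_congr rfl fun i _ => by ring
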